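/- The comultiplication satisfies Δ(K_{≥0}) ⊆ K_{≥0} ⊗ K_{≥0} + K_{>0} ⊗ B (as subspaces of B ⊗ B). -/

import Mathlib

open TensorProduct

noncomputable section

/-- The standard inner product on `ℤ^θ`: `(α|ω) = Σ_i α_i ω_i`. -/
def innerZ {θ : ℕ} (α ω : Fin θ → ℤ) : ℤ := ∑ i, α i * ω i

variable {k : Type*} [Field k] {B : Type*} [Ring B] [Bialgebra k B]

/-- The image of `p ⊗ q` inside `B ⊗[k] B`, for submodules `p, q ⊆ B`. -/
def tpSub (p q : Submodule k B) : Submodule k (B ⊗[k] B) :=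
  LinearMap.range (TensorProduct.map p.subtype q.subtype)

variable {θ : ℕ}

/-- `B_{≥0} = ⊕_{(α|ω) ≥ 0} B^α`. -/
def Bge (𝒜 : (Fin θ → ℤ) → Submodule k B) (ω : Fin θ → ℤ) : Submodule k B :=
  ⨆ (α : Fin θ → ℤ) (_ : 0 ≤ innerZ α ω), 𝒜 α

/-- `B_{>0} = ⊕_{(α|ω) > 0} B^α`. -/
def Bgt (𝒜 : (Fin θ → ℤ) → Submodule k B) (ω : Fin θ → ℤ) : Submodule k B :=
  ⨆ (α : Fin θ → ℤ) (_ : 0 < innerZ α ω), 𝒜 α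

/-- `B_0 = ⊕_{(α|ω) = 0} B^α`. -/
def Bzero (𝒜 : (Fin θ → ℤ) → Submodule k B) (ω : Fin θ → ℤ) : Submodule k B :=
  ⨆ (α : Fin θ → ℤ) (_ : innerZ α ω = 0), 𝒜 α

/-- `K_{≥0} = {x ∈ B : Δ(x) ∈ B_{≥0} ⊗ B}`. -/
def Kge (𝒜 : (Fin θ → ℤ) → Submodule k B) (ω : Fin θ → ℤ) : Submodule k B :=
  Submodule.comap (Coalgebra.comul (R := k)) (tpSub (Bge 𝒜 ω) ⊤)

/-- `K_{>0} = K_{≥0} ∩ B_{>0}`. -/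
def Kgt (𝒜 : (Fin θ → ℤ) → Submodule k B) (ω : Fin θ → ℤ) : Submodule k B :=
  Kge 𝒜 ω ⊓ Bgt 𝒜 ω

/-- `K_0 = K_{≥0} ∩ B_0`. -/
def Kzero (𝒜 : (Fin θ → ℤ) → Submodule k B) (ω : Fin θ → ℤ) : Submodule k B :=
  Kge 𝒜 ω ⊓ Bzero 𝒜 ω


open scoped DirectSum



namespace S4

attribute [local instance] Classical.propDecidable

variable {k : Type*} [Field k] {B : Type*} [Ring B] [Bialgebra k B] {θ : ℕ}
variable {𝒜 : (Fin θ → ℤ) → Submodule k B}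

/-- decomposition equivalence -/
def EE (h : DirectSum.IsInternal 𝒜) : B ≃ₗ[k] ⨁ α, 𝒜 α :=
  (LinearEquiv.ofBijective (DirectSum.coeLinearMap 𝒜) h).symm

lemma EE_symm_apply (h : DirectSum.IsInternal 𝒜) (y : ⨁ α, 𝒜 α) :
    (EE h).symm y = DirectSum.coeLinearMap 𝒜 y := by
  simp [EE]
  rfl

lemma EE_apply_of_mem (h : DirectSum.IsInternal 𝒜) {p : Fin θ → ℤ} {a : B} (ha : a ∈ 𝒜 p) :
    EE h a = DirectSum.of (fun α => (𝒜 α : Type _)) p ⟨a, ha⟩ := by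
  apply (EE h).symm.injective
  rw [LinearEquiv.symm_apply_apply, EE_symm_apply, DirectSum.coeLinearMap_of]

/-- projection onto the components in `S` -/
def piS (h : DirectSum.IsInternal 𝒜) (S : (Fin θ → ℤ) → Prop) : B →ₗ[k] B :=
  (EE h).symm.toLinearMap ∘ₗ (DFinsupp.filterLinearMap k (fun α => (𝒜 α : Type _)) S) ∘ₗ
    (EE h).toLinearMap

lemma piS_apply_of_mem (h : DirectSum.IsInternal 𝒜) (S : (Fin θ → ℤ) → Prop) {p : Fin θ → ℤ}
    {a : B} (ha : a ∈ 𝒜 p) : piS h S a = if S p then a else 0 := by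
  have h1 : EE h a = DirectSum.of (fun α => (𝒜 α : Type _)) p ⟨a, ha⟩ := EE_apply_of_mem h ha
  have h2 : (DFinsupp.filterLinearMap k (fun α => (𝒜 α : Type _)) S)
      (DirectSum.of (fun α => (𝒜 α : Type _)) p ⟨a, ha⟩)
      = if S p then DirectSum.of (fun α => (𝒜 α : Type _)) p ⟨a, ha⟩ else 0 := by
    simp only [DFinsupp.filterLinearMap_apply]
    exact DFinsupp.filter_single _ _ _
  have : piS h S a = (EE h).symm
      ((DFinsupp.filterLinearMap k (fun α => (𝒜 α : Type _)) S) (EE h a)) := rfl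
  rw [this, h1, h2]
  by_cases hS : S p
  · rw [if_pos hS, if_pos hS, EE_symm_apply, DirectSum.coeLinearMap_of]
  · rw [if_neg hS, if_neg hS, LinearEquiv.map_zero]


/-- decomposition of the tensor square -/
def DD (h : DirectSum.IsInternal 𝒜) :
    (B ⊗[k] B) ≃ₗ[k] ⨁ pq : (Fin θ → ℤ) × (Fin θ → ℤ), ((𝒜 pq.1 : Type _) ⊗[k] (𝒜 pq.2 : Type _)) :=
  (TensorProduct.congr (EE h) (EE h)).trans
    (TensorProduct.directSum k k (fun α => (𝒜 α : Type _)) (fun α => (𝒜 α : Type _)))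

/-- projection of the tensor square onto bidegrees in `T` -/
def Pi2 (h : DirectSum.IsInternal 𝒜) (T : (Fin θ → ℤ) × (Fin θ → ℤ) → Prop) :
    (B ⊗[k] B) →ₗ[k] (B ⊗[k] B) :=
  (DD h).symm.toLinearMap ∘ₗ (DFinsupp.filterLinearMap k _ T) ∘ₗ (DD h).toLinearMap

lemma DD_tmul (h : DirectSum.IsInternal 𝒜) {p q : Fin θ → ℤ} {a b : B}
    (ha : a ∈ 𝒜 p) (hb : b ∈ 𝒜 q) :
    DD h (a ⊗ₜ[k] b) = DirectSum.of (fun pq : (Fin θ → ℤ) × (Fin θ → ℤ) => ((𝒜 pq.1 : Type _) ⊗[k] (𝒜 pq.2 : Type _))) (p, q) (⟨a, ha⟩ ⊗ₜ[k] ⟨b, hb⟩) := by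
  have : DD h (a ⊗ₜ[k] b) = (TensorProduct.directSum k k (fun α => (𝒜 α : Type _))
      (fun α => (𝒜 α : Type _))) ((EE h a) ⊗ₜ[k] (EE h b)) := rfl
  rw [this, EE_apply_of_mem h ha, EE_apply_of_mem h hb, ← DirectSum.lof_eq_of k,
    ← DirectSum.lof_eq_of k, TensorProduct.directSum_lof_tmul_lof, DirectSum.lof_eq_of]

lemma Pi2_tmul (h : DirectSum.IsInternal 𝒜) (T : (Fin θ → ℤ) × (Fin θ → ℤ) → Prop)
    {p q : Fin θ → ℤ} {a b : B} (ha : a ∈ 𝒜 p) (hb : b ∈ 𝒜 q) :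
    Pi2 h T (a ⊗ₜ[k] b) = if T (p, q) then a ⊗ₜ[k] b else 0 := by
  have h0 : Pi2 h T (a ⊗ₜ[k] b) = (DD h).symm
      ((DFinsupp.filterLinearMap k _ T) (DD h (a ⊗ₜ[k] b))) := rfl
  rw [h0, DD_tmul h ha hb]
  have h2 : (DFinsupp.filterLinearMap k
        (fun pq : (Fin θ → ℤ) × (Fin θ → ℤ) => ((𝒜 pq.1 : Type _) ⊗[k] (𝒜 pq.2 : Type _))) T)
      (DirectSum.of (fun pq : (Fin θ → ℤ) × (Fin θ → ℤ) => ((𝒜 pq.1 : Type _) ⊗[k] (𝒜 pq.2 : Type _))) (p, q) (⟨a, ha⟩ ⊗ₜ[k] ⟨b, hb⟩))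
      = if T (p, q) then DirectSum.of (fun pq : (Fin θ → ℤ) × (Fin θ → ℤ) => ((𝒜 pq.1 : Type _) ⊗[k] (𝒜 pq.2 : Type _))) (p, q) (⟨a, ha⟩ ⊗ₜ[k] ⟨b, hb⟩) else 0 := by
    simp only [DFinsupp.filterLinearMap_apply]
    exact DFinsupp.filter_single _ _ _
  rw [h2]
  by_cases hT : T (p, q)
  · rw [if_pos hT, if_pos hT, LinearEquiv.symm_apply_eq, DD_tmul h ha hb]
  · rw [if_neg hT, if_neg hT, LinearEquiv.map_zero]

lemma ext_homog (h : DirectSum.IsInternal 𝒜) {V : Type*} [AddCommGroup V] [Module k V]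
    {L₁ L₂ : B →ₗ[k] V} (H : ∀ (p : Fin θ → ℤ), ∀ a ∈ 𝒜 p, L₁ a = L₂ a) : L₁ = L₂ := by
  ext x
  have hx : x ∈ ⨆ p, 𝒜 p := by rw [h.submodule_iSup_eq_top]; trivial
  have hle : (⨆ p, 𝒜 p) ≤ LinearMap.ker (L₁ - L₂) := by
    refine iSup_le fun p => ?_
    intro a ha
    simp only [LinearMap.mem_ker, LinearMap.sub_apply, sub_eq_zero]
    exact H p a ha
  simpa only [LinearMap.mem_ker, LinearMap.sub_apply, sub_eq_zero] using hle hx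

lemma tmul_mem_tpSub {p q : Submodule k B} {a b : B} (ha : a ∈ p) (hb : b ∈ q) :
    a ⊗ₜ[k] b ∈ tpSub p q :=
  ⟨(⟨a, ha⟩ : p) ⊗ₜ[k] (⟨b, hb⟩ : q), rfl⟩

lemma map_mem_tpSub {M N : Type*} [AddCommGroup M] [Module k M] [AddCommGroup N] [Module k N]
    {f : M →ₗ[k] B} {g : N →ₗ[k] B} {p q : Submodule k B}
    (hf : ∀ m, f m ∈ p) (hg : ∀ n, g n ∈ q) (w : M ⊗[k] N) :
    TensorProduct.map f g w ∈ tpSub p q := by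
  induction w using TensorProduct.induction_on with
  | zero => exact zero_mem _
  | add x y hx hy => rw [map_add]; exact add_mem hx hy
  | tmul m n => simpa using tmul_mem_tpSub (hf m) (hg n)

lemma tpSub_mono {p q p' q' : Submodule k B} (hp : p ≤ p') (hq : q ≤ q') :
    tpSub p q ≤ tpSub p' q' := by
  rintro _ ⟨s, rfl⟩
  exact map_mem_tpSub (fun m => hp m.2) (fun n => hq n.2) s

lemma top_le_iSup_tpSub (h : DirectSum.IsInternal 𝒜) :
    (⊤ : Submodule k (B ⊗[k] B)) ≤
      ⨆ pq : (Fin θ → ℤ) × (Fin θ → ℤ), tpSub (𝒜 pq.1) (𝒜 pq.2) := by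
  intro t ht
  clear ht
  induction t using TensorProduct.induction_on with
  | zero => exact zero_mem _
  | add x y hx hy => exact add_mem hx hy
  | tmul a b =>
    have ha : a ∈ ⨆ p, 𝒜 p := by rw [h.submodule_iSup_eq_top]; trivial
    refine Submodule.iSup_induction (motive := fun a' =>
      a' ⊗ₜ[k] b ∈ ⨆ pq : (Fin θ → ℤ) × (Fin θ → ℤ), tpSub (𝒜 pq.1) (𝒜 pq.2)) _ ha ?_ ?_ ?_
    · intro p a' ha'
      have hb : b ∈ ⨆ q, 𝒜 q := by rw [h.submodule_iSup_eq_top]; trivial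
      refine Submodule.iSup_induction (motive := fun b' =>
        a' ⊗ₜ[k] b' ∈ ⨆ pq : (Fin θ → ℤ) × (Fin θ → ℤ), tpSub (𝒜 pq.1) (𝒜 pq.2)) _ hb ?_ ?_ ?_
      · intro q b' hb'
        exact Submodule.mem_iSup_of_mem (p, q) (tmul_mem_tpSub ha' hb')
      · simp
      · intro y z hy hz; simpa [tmul_add] using add_mem hy hz
    · simp
    · intro y z hy hz; simpa [add_tmul] using add_mem hy hz

lemma eqOn_tpSub {V : Type*} [AddCommGroup V] [Module k V] {L₁ L₂ : B ⊗[k] B →ₗ[k] V}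
    {p q : Submodule k B} (H : ∀ a ∈ p, ∀ b ∈ q, L₁ (a ⊗ₜ[k] b) = L₂ (a ⊗ₜ[k] b)) :
    ∀ t ∈ tpSub p q, L₁ t = L₂ t := by
  rintro _ ⟨s, rfl⟩
  induction s using TensorProduct.induction_on with
  | zero => simp
  | add x y hx hy => rw [map_add, map_add, map_add, hx, hy]
  | tmul a b => simpa using H a a.2 b b.2

lemma ext_homog2 (h : DirectSum.IsInternal 𝒜) {V : Type*} [AddCommGroup V] [Module k V]
    {L₁ L₂ : B ⊗[k] B →ₗ[k] V}
    (H : ∀ (p q : Fin θ → ℤ), ∀ a ∈ 𝒜 p, ∀ b ∈ 𝒜 q, L₁ (a ⊗ₜ[k] b) = L₂ (a ⊗ₜ[k] b)) :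
    L₁ = L₂ := by
  apply LinearMap.ext; intro t
  have ht : t ∈ ⨆ pq : (Fin θ → ℤ) × (Fin θ → ℤ), tpSub (𝒜 pq.1) (𝒜 pq.2) :=
    top_le_iSup_tpSub h trivial
  have hle : (⨆ pq : (Fin θ → ℤ) × (Fin θ → ℤ), tpSub (𝒜 pq.1) (𝒜 pq.2)) ≤
      LinearMap.ker (L₁ - L₂) := by
    refine iSup_le fun pq => ?_
    intro s hs
    simp only [LinearMap.mem_ker, LinearMap.sub_apply, sub_eq_zero]
    exact eqOn_tpSub (H pq.1 pq.2) s hs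
  simpa only [LinearMap.mem_ker, LinearMap.sub_apply, sub_eq_zero] using hle ht

lemma Pi2_eq_self_on (h : DirectSum.IsInternal 𝒜) {T : (Fin θ → ℤ) × (Fin θ → ℤ) → Prop}
    {p q : Fin θ → ℤ} (hT : T (p, q)) :
    ∀ t ∈ tpSub (𝒜 p) (𝒜 q), Pi2 h T t = t := by
  refine eqOn_tpSub (L₂ := (LinearMap.id : B ⊗[k] B →ₗ[k] B ⊗[k] B)) fun a ha b hb => ?_
  rw [Pi2_tmul h T ha hb, if_pos hT]; rfl

lemma Pi2_eq_zero_on (h : DirectSum.IsInternal 𝒜) {T : (Fin θ → ℤ) × (Fin θ → ℤ) → Prop}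
    {p q : Fin θ → ℤ} (hT : ¬ T (p, q)) :
    ∀ t ∈ tpSub (𝒜 p) (𝒜 q), Pi2 h T t = 0 := by
  refine eqOn_tpSub (L₂ := 0) fun a ha b hb => ?_
  rw [Pi2_tmul h T ha hb, if_neg hT]; rfl

lemma Pi2_true (h : DirectSum.IsInternal 𝒜) :
    Pi2 h (fun _ => True) = (LinearMap.id : B ⊗[k] B →ₗ[k] B ⊗[k] B) :=
  ext_homog2 h fun p q a ha b hb => by rw [Pi2_tmul h _ ha hb, if_pos trivial]; rfl

lemma Pi2_comp (h : DirectSum.IsInternal 𝒜) (T T' : (Fin θ → ℤ) × (Fin θ → ℤ) → Prop) :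
    Pi2 h T ∘ₗ Pi2 h T' = Pi2 h (fun pq => T pq ∧ T' pq) := by
  refine ext_homog2 h fun p q a ha b hb => ?_
  rw [LinearMap.comp_apply, Pi2_tmul h T' ha hb, Pi2_tmul h _ ha hb]
  by_cases h1 : T' (p, q) <;> by_cases h2 : T (p, q) <;>
    simp [h1, h2, Pi2_tmul h T ha hb]

lemma Pi2_add_disjoint (h : DirectSum.IsInternal 𝒜) {T T' : (Fin θ → ℤ) × (Fin θ → ℤ) → Prop}
    (hd : ∀ pq, ¬ (T pq ∧ T' pq)) :
    Pi2 h T + Pi2 h T' = Pi2 h (fun pq => T pq ∨ T' pq) := by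
  refine ext_homog2 h fun p q a ha b hb => ?_
  rw [LinearMap.add_apply, Pi2_tmul h T ha hb, Pi2_tmul h T' ha hb, Pi2_tmul h _ ha hb]
  by_cases h1 : T (p, q) <;> by_cases h2 : T' (p, q)
  · exact absurd ⟨h1, h2⟩ (hd (p, q))
  · simp [h1, h2]
  · simp [h1, h2]
  · simp [h1, h2]

lemma map_piS_piS (h : DirectSum.IsInternal 𝒜) (S S' : (Fin θ → ℤ) → Prop) :
    TensorProduct.map (piS h S) (piS h S') = Pi2 h (fun pq => S pq.1 ∧ S' pq.2) := by
  refine ext_homog2 h fun p q a ha b hb => ?_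
  rw [TensorProduct.map_tmul, piS_apply_of_mem h S ha, piS_apply_of_mem h S' hb,
    Pi2_tmul h _ ha hb]
  by_cases h1 : S p <;> by_cases h2 : S' q <;> simp [h1, h2]

lemma Pi2_false (h : DirectSum.IsInternal 𝒜) :
    Pi2 h (fun _ => False) = (0 : B ⊗[k] B →ₗ[k] B ⊗[k] B) :=
  ext_homog2 h fun p q a ha b hb => by
    rw [Pi2_tmul h _ ha hb, if_neg (by exact fun hc => hc)]; rfl

lemma piS_true (h : DirectSum.IsInternal 𝒜) :
    piS h (fun _ => True) = (LinearMap.id : B →ₗ[k] B) :=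
  ext_homog h fun p a ha => by rw [piS_apply_of_mem h _ ha, if_pos trivial]; rfl

lemma piS_add_compl (h : DirectSum.IsInternal 𝒜) (S : (Fin θ → ℤ) → Prop) :
    piS h S + piS h (fun p => ¬ S p) = (LinearMap.id : B →ₗ[k] B) := by
  refine ext_homog h fun p a ha => ?_
  rw [LinearMap.add_apply, piS_apply_of_mem h _ ha, piS_apply_of_mem h _ ha]
  by_cases h1 : S p <;> simp [h1]

lemma piS_mem (h : DirectSum.IsInternal 𝒜) (S : (Fin θ → ℤ) → Prop) (x : B) :
    piS h S x ∈ ⨆ p, ⨆ _ : S p, 𝒜 p := by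
  have hx : x ∈ ⨆ p, 𝒜 p := by rw [h.submodule_iSup_eq_top]; trivial
  refine Submodule.iSup_induction (motive := fun y => piS h S y ∈ ⨆ p, ⨆ _ : S p, 𝒜 p) _ hx ?_ ?_ ?_
  · intro p a ha
    rw [piS_apply_of_mem h S ha]
    by_cases h1 : S p
    · rw [if_pos h1]
      exact Submodule.mem_iSup_of_mem p (Submodule.mem_iSup_of_mem h1 ha)
    · rw [if_neg h1]; exact zero_mem _
  · simp
  · intro y z hy hz; rw [map_add]; exact add_mem hy hz

lemma piS_eq_self_of_mem (h : DirectSum.IsInternal 𝒜) {S : (Fin θ → ℤ) → Prop} {x : B}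
    (hx : x ∈ ⨆ p, ⨆ _ : S p, 𝒜 p) : piS h S x = x := by
  have hle : (⨆ p, ⨆ _ : S p, 𝒜 p) ≤ LinearMap.ker (piS h S - LinearMap.id) := by
    refine iSup_le fun p => iSup_le fun hS => ?_
    intro a ha
    simp only [LinearMap.mem_ker, LinearMap.sub_apply, LinearMap.id_apply, sub_eq_zero]
    rw [piS_apply_of_mem h S ha, if_pos hS]
  simpa only [LinearMap.mem_ker, LinearMap.sub_apply, LinearMap.id_apply, sub_eq_zero]
    using hle hx

lemma mem_iSup_iff_piS (h : DirectSum.IsInternal 𝒜) {S : (Fin θ → ℤ) → Prop} {x : B} :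
    x ∈ (⨆ p, ⨆ _ : S p, 𝒜 p) ↔ piS h (fun p => ¬ S p) x = 0 := by
  constructor
  · intro hx
    have h1 := piS_eq_self_of_mem h hx
    have h2 := LinearMap.congr_fun (piS_add_compl h S) x
    simp only [LinearMap.add_apply, LinearMap.id_apply, h1] at h2
    have := add_left_cancel (a := x) (by rw [h2, add_zero] : x + (piS h fun p => ¬S p) x = x + 0)
    exact this
  · intro hx
    have h2 := LinearMap.congr_fun (piS_add_compl h S) x
    simp only [LinearMap.add_apply, LinearMap.id_apply, hx, add_zero] at h2
    rw [← h2]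
    exact piS_mem h S x

/-- Pi2 applied to `comul a` for homogeneous `a`, when the predicate holds on all
bidegrees summing to the degree of `a`. -/
lemma Pi2_comul_eq_self (h : DirectSum.IsInternal 𝒜)
    (hcomul : ∀ (γ : Fin θ → ℤ), ∀ x ∈ 𝒜 γ,
      Coalgebra.comul (R := k) x ∈
        ⨆ (pq : (Fin θ → ℤ) × (Fin θ → ℤ)) (_ : pq.1 + pq.2 = γ), tpSub (𝒜 pq.1) (𝒜 pq.2))
    {T : (Fin θ → ℤ) × (Fin θ → ℤ) → Prop} {γ : Fin θ → ℤ} {a : B} (ha : a ∈ 𝒜 γ)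
    (hT : ∀ pq : (Fin θ → ℤ) × (Fin θ → ℤ), pq.1 + pq.2 = γ → T pq) :
    Pi2 h T (Coalgebra.comul (R := k) a) = Coalgebra.comul (R := k) a := by
  have hle : (⨆ (pq : (Fin θ → ℤ) × (Fin θ → ℤ)) (_ : pq.1 + pq.2 = γ),
      tpSub (𝒜 pq.1) (𝒜 pq.2)) ≤ LinearMap.ker (Pi2 h T - LinearMap.id) := by
    refine iSup_le fun pq => iSup_le fun hpq => ?_
    intro t ht
    simp only [LinearMap.mem_ker, LinearMap.sub_apply, LinearMap.id_apply, sub_eq_zero]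
    exact Pi2_eq_self_on h (hT pq hpq) t ht
  simpa only [LinearMap.mem_ker, LinearMap.sub_apply, LinearMap.id_apply, sub_eq_zero]
    using hle (hcomul γ a ha)

lemma Pi2_comul_eq_zero (h : DirectSum.IsInternal 𝒜)
    (hcomul : ∀ (γ : Fin θ → ℤ), ∀ x ∈ 𝒜 γ,
      Coalgebra.comul (R := k) x ∈
        ⨆ (pq : (Fin θ → ℤ) × (Fin θ → ℤ)) (_ : pq.1 + pq.2 = γ), tpSub (𝒜 pq.1) (𝒜 pq.2))
    {T : (Fin θ → ℤ) × (Fin θ → ℤ) → Prop} {γ : Fin θ → ℤ} {a : B} (ha : a ∈ 𝒜 γ)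
    (hT : ∀ pq : (Fin θ → ℤ) × (Fin θ → ℤ), pq.1 + pq.2 = γ → ¬ T pq) :
    Pi2 h T (Coalgebra.comul (R := k) a) = 0 := by
  have hle : (⨆ (pq : (Fin θ → ℤ) × (Fin θ → ℤ)) (_ : pq.1 + pq.2 = γ),
      tpSub (𝒜 pq.1) (𝒜 pq.2)) ≤ LinearMap.ker (Pi2 h T) := by
    refine iSup_le fun pq => iSup_le fun hpq => ?_
    intro t ht
    simpa only [LinearMap.mem_ker] using Pi2_eq_zero_on h (hT pq hpq) t ht
  simpa only [LinearMap.mem_ker] using hle (hcomul γ a ha)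


lemma Pi2_congr (h : DirectSum.IsInternal 𝒜) {T T' : (Fin θ → ℤ) × (Fin θ → ℤ) → Prop}
    (hTT : ∀ pq, T pq ↔ T' pq) : Pi2 h T = Pi2 h T' :=
  ext_homog2 h fun p q a ha b hb => by
    rw [Pi2_tmul h T ha hb, Pi2_tmul h T' ha hb, if_congr (hTT (p, q)) rfl rfl]

/-- the "bad part" projection of the tensor square -/
def NN (h : DirectSum.IsInternal 𝒜) (ω : Fin θ → ℤ) : B ⊗[k] B →ₗ[k] B ⊗[k] B :=
  Pi2 h (fun pq => innerZ pq.1 ω < 0)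

/-- `Kge` as the kernel of this map -/
def Phi (h : DirectSum.IsInternal 𝒜) (ω : Fin θ → ℤ) : B →ₗ[k] B ⊗[k] B :=
  NN h ω ∘ₗ (Coalgebra.comul (R := k) (A := B))

lemma mem_tpSub_Bge_iff (h : DirectSum.IsInternal 𝒜) (ω : Fin θ → ℤ) (t : B ⊗[k] B) :
    t ∈ tpSub (Bge 𝒜 ω) ⊤ ↔ NN h ω t = 0 := by
  constructor
  · intro ht
    refine eqOn_tpSub (L₂ := (0 : B ⊗[k] B →ₗ[k] B ⊗[k] B)) ?_ t ht
    intro a ha b _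
    have ha' : piS h (fun p => 0 ≤ innerZ p ω) a = a := piS_eq_self_of_mem h ha
    have hb' : piS h (fun _ => True) b = b := by rw [piS_true]; rfl
    have : a ⊗ₜ[k] b =
        TensorProduct.map (piS h (fun p => 0 ≤ innerZ p ω)) (piS h (fun _ => True))
          (a ⊗ₜ[k] b) := by
      rw [TensorProduct.map_tmul, ha', hb']
    rw [this, ← LinearMap.comp_apply, map_piS_piS, NN, ← LinearMap.comp_apply, Pi2_comp]
    have h0 : Pi2 h (fun pq : (Fin θ → ℤ) × (Fin θ → ℤ) =>
        innerZ pq.1 ω < 0 ∧ (0 ≤ innerZ pq.1 ω ∧ True)) = Pi2 h (fun _ => False) :=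
      Pi2_congr h fun pq => by
        constructor
        · rintro ⟨h1, h2, -⟩; exact absurd h2 (not_le.mpr h1)
        · intro hf; exact absurd hf (by exact fun hc => hc)
    rw [h0, Pi2_false]
    rfl
  · intro ht
    have hsum : Pi2 h (fun pq : (Fin θ → ℤ) × (Fin θ → ℤ) => 0 ≤ innerZ pq.1 ω) +
        Pi2 h (fun pq : (Fin θ → ℤ) × (Fin θ → ℤ) => innerZ pq.1 ω < 0) =
        Pi2 h (fun pq : (Fin θ → ℤ) × (Fin θ → ℤ) =>
          0 ≤ innerZ pq.1 ω ∨ innerZ pq.1 ω < 0) := by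
      refine Pi2_add_disjoint h fun pq => ?_
      rintro ⟨h1, h2⟩; exact absurd h1 (not_le.mpr h2)
    have htrue : Pi2 h (fun pq : (Fin θ → ℤ) × (Fin θ → ℤ) =>
        0 ≤ innerZ pq.1 ω ∨ innerZ pq.1 ω < 0) = Pi2 h (fun _ => True) :=
      Pi2_congr h fun pq => by
        constructor
        · intro _; trivial
        · intro _; exact le_or_gt 0 _
    have hid := LinearMap.congr_fun (hsum.trans (htrue.trans (Pi2_true h))) t
    simp only [LinearMap.add_apply, LinearMap.id_apply] at hid
    have hNN : NN h ω t = 0 := ht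
    rw [NN] at hNN
    rw [hNN, add_zero] at hid
    rw [← hid]
    have hmap : Pi2 h (fun pq : (Fin θ → ℤ) × (Fin θ → ℤ) => 0 ≤ innerZ pq.1 ω) =
        TensorProduct.map (piS h (fun p => 0 ≤ innerZ p ω)) (piS h (fun _ => True)) := by
      rw [map_piS_piS]
      exact Pi2_congr h fun pq => by simp
    rw [hmap]
    exact map_mem_tpSub (fun m => piS_mem h _ m) (fun n => Submodule.mem_top) t

lemma mem_Kge_iff (h : DirectSum.IsInternal 𝒜) (ω : Fin θ → ℤ) (x : B) :
    x ∈ Kge 𝒜 ω ↔ Phi h ω x = 0 := by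
  rw [Kge, Submodule.mem_comap, mem_tpSub_Bge_iff h ω]
  rfl

lemma flat_rTensor_exact_aux {V W : Type*} [AddCommGroup V] [Module k V] [AddCommGroup W]
    [Module k W] (p' q' : Submodule k V) (Ψ : p' →ₗ[k] W) :
    Function.Exact ((LinearMap.ker Ψ).subtype.rTensor q') (Ψ.rTensor q') :=
  Module.Flat.rTensor_exact q' (LinearMap.exact_subtype_ker_map Ψ)

lemma flat_lTensor_exact_aux {V W : Type*} [AddCommGroup V] [Module k V] [AddCommGroup W]
    [Module k W] (p' q' : Submodule k V) (Ψ : q' →ₗ[k] W) :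
    Function.Exact ((LinearMap.ker Ψ).subtype.lTensor p') (Ψ.lTensor p') :=
  Module.Flat.lTensor_exact p' (LinearMap.exact_subtype_ker_map Ψ)

lemma left_exact_step {p' q' : Submodule k B} (Φ : B →ₗ[k] B ⊗[k] B) {t : B ⊗[k] B}
    (ht : t ∈ tpSub p' q')
    (hz : TensorProduct.map Φ (LinearMap.id (R := k) (M := B)) t = 0) :
    t ∈ tpSub (p' ⊓ LinearMap.ker Φ) q' := by
  obtain ⟨s, rfl⟩ := ht
  set Ψ : p' →ₗ[k] B ⊗[k] B := Φ ∘ₗ p'.subtype with hΨ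
  have hcomp : (q'.subtype.lTensor (B ⊗[k] B)) ∘ₗ (Ψ.rTensor q') =
      TensorProduct.map Φ LinearMap.id ∘ₗ TensorProduct.map p'.subtype q'.subtype := by
    rw [LinearMap.lTensor, LinearMap.rTensor, ← TensorProduct.map_comp, ← TensorProduct.map_comp]
    congr 1
  have h0 : (q'.subtype.lTensor (B ⊗[k] B)) ((Ψ.rTensor q') s) = 0 := by
    rw [← LinearMap.comp_apply, hcomp, LinearMap.comp_apply, hz]
  have hinj : Function.Injective (q'.subtype.lTensor (B ⊗[k] B)) :=
    Module.Flat.lTensor_preserves_injective_linearMap q'.subtype q'.injective_subtype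
  have h1 : (Ψ.rTensor q') s = 0 := by
    apply hinj
    rw [h0, map_zero]
  have hexact : Function.Exact ((LinearMap.ker Ψ).subtype.rTensor q') (Ψ.rTensor q') :=
    flat_rTensor_exact_aux p' q' Ψ
  obtain ⟨w, hw⟩ := (hexact s).mp h1
  have heq : TensorProduct.map p'.subtype q'.subtype s =
      TensorProduct.map (p'.subtype ∘ₗ (LinearMap.ker Ψ).subtype) q'.subtype w := by
    conv_lhs => rw [← hw]
    rw [LinearMap.rTensor, ← LinearMap.comp_apply, ← TensorProduct.map_comp,
      LinearMap.comp_id]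
  rw [heq]
  refine map_mem_tpSub (M := LinearMap.ker Ψ) (N := q') (g := q'.subtype) ?_ (fun n => n.2) w
  intro m
  refine Submodule.mem_inf.mpr ⟨(m : p').2, LinearMap.mem_ker.mpr ?_⟩
  show Φ ((m : p') : B) = 0
  exact LinearMap.mem_ker.mp m.2

lemma right_exact_step {p' q' : Submodule k B} (Φ : B →ₗ[k] B ⊗[k] B) {t : B ⊗[k] B}
    (ht : t ∈ tpSub p' q')
    (hz : TensorProduct.map (LinearMap.id (R := k) (M := B)) Φ t = 0) :
    t ∈ tpSub p' (q' ⊓ LinearMap.ker Φ) := by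
  obtain ⟨s, rfl⟩ := ht
  set Ψ : q' →ₗ[k] B ⊗[k] B := Φ ∘ₗ q'.subtype with hΨ
  have hcomp : (p'.subtype.rTensor (B ⊗[k] B)) ∘ₗ (Ψ.lTensor p') =
      TensorProduct.map LinearMap.id Φ ∘ₗ TensorProduct.map p'.subtype q'.subtype := by
    rw [LinearMap.lTensor, LinearMap.rTensor, ← TensorProduct.map_comp, ← TensorProduct.map_comp]
    congr 1
  have h0 : (p'.subtype.rTensor (B ⊗[k] B)) ((Ψ.lTensor p') s) = 0 := by
    rw [← LinearMap.comp_apply, hcomp, LinearMap.comp_apply, hz]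
  have hinj : Function.Injective (p'.subtype.rTensor (B ⊗[k] B)) :=
    Module.Flat.rTensor_preserves_injective_linearMap p'.subtype p'.injective_subtype
  have h1 : (Ψ.lTensor p') s = 0 := by
    apply hinj
    rw [h0, map_zero]
  have hexact : Function.Exact ((LinearMap.ker Ψ).subtype.lTensor p') (Ψ.lTensor p') :=
    flat_lTensor_exact_aux p' q' Ψ
  obtain ⟨w, hw⟩ := (hexact s).mp h1
  have heq : TensorProduct.map p'.subtype q'.subtype s =
      TensorProduct.map p'.subtype (q'.subtype ∘ₗ (LinearMap.ker Ψ).subtype) w := by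
    conv_lhs => rw [← hw]
    rw [LinearMap.lTensor, ← LinearMap.comp_apply, ← TensorProduct.map_comp,
      LinearMap.comp_id]
  rw [heq]
  refine map_mem_tpSub (M := p') (N := LinearMap.ker Ψ) (f := p'.subtype) (fun n => n.2) ?_ w
  intro m
  refine Submodule.mem_inf.mpr ⟨(m : q').2, LinearMap.mem_ker.mpr ?_⟩
  show Φ ((m : q') : B) = 0
  exact LinearMap.mem_ker.mp m.2

lemma innerZ_add {θ : ℕ} (α β ω : Fin θ → ℤ) :
    innerZ (α + β) ω = innerZ α ω + innerZ β ω := by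
  simp [innerZ, add_mul, Finset.sum_add_distrib]

lemma homog_sum (h : DirectSum.IsInternal 𝒜) (x : B) :
    ∃ (F : Finset (Fin θ → ℤ)) (c : (Fin θ → ℤ) → B),
      (∀ p, c p ∈ 𝒜 p) ∧ x = ∑ p ∈ F, c p := by
  classical
  refine ⟨(EE h x).support, fun p => ((EE h x) p : B), fun p => ((EE h x) p).2, ?_⟩
  conv_lhs => rw [← (EE h).symm_apply_apply x]
  rw [EE_symm_apply]
  conv_lhs => rw [← DirectSum.sum_support_of (EE h x)]
  rw [map_sum]
  exact Finset.sum_congr rfl fun p _ => DirectSum.coeLinearMap_of 𝒜 p _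

lemma ext_homog3 (h : DirectSum.IsInternal 𝒜) {V : Type*} [AddCommGroup V] [Module k V]
    {L₁ L₂ : (B ⊗[k] B) ⊗[k] B →ₗ[k] V}
    (H : ∀ (p q r : Fin θ → ℤ), ∀ a ∈ 𝒜 p, ∀ b ∈ 𝒜 q, ∀ c ∈ 𝒜 r,
      L₁ ((a ⊗ₜ[k] b) ⊗ₜ[k] c) = L₂ ((a ⊗ₜ[k] b) ⊗ₜ[k] c)) : L₁ = L₂ := by
  apply TensorProduct.ext_threefold
  intro x y z
  obtain ⟨F1, c1, hc1, hx⟩ := homog_sum h x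
  obtain ⟨F2, c2, hc2, hy⟩ := homog_sum h y
  obtain ⟨F3, c3, hc3, hz⟩ := homog_sum h z
  rw [hx, hy, hz]
  simp only [sum_tmul, tmul_sum, map_sum]
  refine Finset.sum_congr rfl fun p _ => ?_
  refine Finset.sum_congr rfl fun q _ => ?_
  refine Finset.sum_congr rfl fun r _ => ?_
  exact H _ _ _ _ (hc1 _) _ (hc2 _) _ (hc3 _)

lemma Pi2_single_mem (h : DirectSum.IsInternal 𝒜) (p q : Fin θ → ℤ) (t : B ⊗[k] B) :
    Pi2 h (fun s => s = (p, q)) t ∈ tpSub (𝒜 p) (𝒜 q) := by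
  have ht : t ∈ ⨆ pq : (Fin θ → ℤ) × (Fin θ → ℤ), tpSub (𝒜 pq.1) (𝒜 pq.2) :=
    top_le_iSup_tpSub h trivial
  refine Submodule.iSup_induction
    (motive := fun t' => Pi2 h (fun s => s = (p, q)) t' ∈ tpSub (𝒜 p) (𝒜 q)) _ ht ?_ ?_ ?_
  · rintro ⟨p', q'⟩ t' ht'
    by_cases hpq : ((p', q') : (Fin θ → ℤ) × (Fin θ → ℤ)) = (p, q)
    · have ht'' : t' ∈ tpSub (𝒜 p) (𝒜 q) := by
        rw [show ((p', q') : (Fin θ → ℤ) × (Fin θ → ℤ)) = (p, q) from hpq] at ht'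
        exact ht'
      rw [Pi2_eq_self_on h (T := fun s => s = (p, q)) (p := p) (q := q) rfl t' ht'']
      exact ht''
    · rw [Pi2_eq_zero_on h (T := fun s => s = (p, q)) (p := p') (q := q') hpq t' ht']
      exact zero_mem _
  · simpa using zero_mem (tpSub (𝒜 p) (𝒜 q))
  · intro y z hy hz; simpa [map_add] using add_mem hy hz

lemma DD_Pi2 (h : DirectSum.IsInternal 𝒜) (T : (Fin θ → ℤ) × (Fin θ → ℤ) → Prop)
    (t : B ⊗[k] B) : DD h (Pi2 h T t) = DFinsupp.filter T (DD h t) := by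
  simp [Pi2]
  rfl

lemma comp_decomp (h : DirectSum.IsInternal 𝒜) (t : B ⊗[k] B) :
    ∃ F : Finset ((Fin θ → ℤ) × (Fin θ → ℤ)),
      t = ∑ pq ∈ F, Pi2 h (fun s => s = pq) t := by
  classical
  refine ⟨(DD h t).support, (DD h).injective ?_⟩
  rw [map_sum]
  conv_lhs => rw [← DirectSum.sum_support_of (DD h t)]
  refine Finset.sum_congr rfl fun pq _ => ?_
  rw [DD_Pi2]
  apply DFinsupp.ext
  intro j
  simp only [DFinsupp.filter_apply]
  by_cases hj : j = pq
  · subst hj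
    rw [if_pos rfl, DirectSum.of_eq_same]
  · rw [if_neg hj, DirectSum.of_eq_of_ne _ _ _ hj]

lemma NN_eq_map (h : DirectSum.IsInternal 𝒜) (ω : Fin θ → ℤ) :
    NN h ω = TensorProduct.map (piS h (fun p => innerZ p ω < 0))
      (LinearMap.id (R := k) (M := B)) := by
  rw [← piS_true h, map_piS_piS]
  exact Pi2_congr h fun pq => by simp

lemma map_Phi_id_comul (h : DirectSum.IsInternal 𝒜) (ω : Fin θ → ℤ) {x : B}
    (hx : Phi h ω x = 0) :
    TensorProduct.map (Phi h ω) (LinearMap.id (R := k) (M := B))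
      (Coalgebra.comul (R := k) x) = 0 := by
  have h1 : TensorProduct.map (Phi h ω) (LinearMap.id (R := k) (M := B)) =
      TensorProduct.map (NN h ω) LinearMap.id ∘ₗ
        TensorProduct.map (Coalgebra.comul (R := k) (A := B)) LinearMap.id := by
    rw [← TensorProduct.map_comp, LinearMap.id_comp]
    rfl
  have h2 : TensorProduct.map (Coalgebra.comul (R := k) (A := B))
      (LinearMap.id (R := k) (M := B)) (Coalgebra.comul (R := k) x) =
      (TensorProduct.assoc k B B B).symm
        ((Coalgebra.comul (R := k) (A := B)).lTensor B (Coalgebra.comul (R := k) x)) := by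
    rw [Coalgebra.coassoc_symm_apply]
    rfl
  have h3' : TensorProduct.map (piS h (fun p => innerZ p ω < 0))
      (LinearMap.id (R := k) (M := B ⊗[k] B)) ∘ₗ
        (Coalgebra.comul (R := k) (A := B)).lTensor B =
      (Coalgebra.comul (R := k) (A := B)).lTensor B ∘ₗ
        TensorProduct.map (piS h (fun p => innerZ p ω < 0)) LinearMap.id := by
    rw [LinearMap.lTensor, ← TensorProduct.map_comp, ← TensorProduct.map_comp]
    simp only [LinearMap.comp_id, LinearMap.id_comp]
  have h6 : TensorProduct.map (piS h (fun p => innerZ p ω < 0))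
      (LinearMap.id (R := k) (M := B)) (Coalgebra.comul (R := k) x) = 0 := by
    rw [← NN_eq_map]
    exact hx
  have h5 : TensorProduct.map (piS h (fun p => innerZ p ω < 0))
      (LinearMap.id (R := k) (M := B ⊗[k] B))
      ((Coalgebra.comul (R := k) (A := B)).lTensor B (Coalgebra.comul (R := k) x)) =
      (Coalgebra.comul (R := k) (A := B)).lTensor B
        (TensorProduct.map (piS h (fun p => innerZ p ω < 0)) LinearMap.id
          (Coalgebra.comul (R := k) x)) :=
    LinearMap.congr_fun h3' (Coalgebra.comul (R := k) x)
  rw [h1, LinearMap.comp_apply, h2, NN_eq_map h ω, TensorProduct.map_map_assoc_symm,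
    TensorProduct.map_id, h5, h6, map_zero, LinearEquiv.map_zero]

lemma M2_comul (h : DirectSum.IsInternal 𝒜)
    (hcomul : ∀ (γ : Fin θ → ℤ), ∀ x ∈ 𝒜 γ,
      Coalgebra.comul (R := k) x ∈
        ⨆ (pq : (Fin θ → ℤ) × (Fin θ → ℤ)) (_ : pq.1 + pq.2 = γ), tpSub (𝒜 pq.1) (𝒜 pq.2))
    (ω : Fin θ → ℤ) :
    Pi2 h (fun rs => innerZ (rs.1 + rs.2) ω < 0) ∘ₗ (Coalgebra.comul (R := k) (A := B)) =
    (Coalgebra.comul (R := k) (A := B)) ∘ₗ piS h (fun p => innerZ p ω < 0) := by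
  refine ext_homog h fun γ a ha => ?_
  rw [LinearMap.comp_apply, LinearMap.comp_apply, piS_apply_of_mem h _ ha]
  by_cases hγ : innerZ γ ω < 0
  · rw [if_pos hγ]
    exact Pi2_comul_eq_self h hcomul ha fun pq hpq => by rw [hpq]; exact hγ
  · rw [if_neg hγ, map_zero]
    exact Pi2_comul_eq_zero h hcomul ha fun pq hpq => by rw [hpq]; exact hγ

lemma Pi2_restrict_comul (h : DirectSum.IsInternal 𝒜)
    (hcomul : ∀ (γ : Fin θ → ℤ), ∀ x ∈ 𝒜 γ,
      Coalgebra.comul (R := k) x ∈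
        ⨆ (pq : (Fin θ → ℤ) × (Fin θ → ℤ)) (_ : pq.1 + pq.2 = γ), tpSub (𝒜 pq.1) (𝒜 pq.2))
    {γ : Fin θ → ℤ} {a : B} (ha : a ∈ 𝒜 γ) (T : (Fin θ → ℤ) × (Fin θ → ℤ) → Prop) :
    Pi2 h (fun rs => rs.1 + rs.2 = γ ∧ T rs) (Coalgebra.comul (R := k) a) =
      Pi2 h T (Coalgebra.comul (R := k) a) := by
  have hd : Pi2 h (fun rs => rs.1 + rs.2 = γ ∧ T rs) +
      Pi2 h (fun rs => ¬(rs.1 + rs.2 = γ) ∧ T rs) =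
      Pi2 h (fun rs => (rs.1 + rs.2 = γ ∧ T rs) ∨ (¬(rs.1 + rs.2 = γ) ∧ T rs)) :=
    Pi2_add_disjoint h fun pq => by tauto
  have hz : Pi2 h (fun rs => ¬(rs.1 + rs.2 = γ) ∧ T rs) (Coalgebra.comul (R := k) a) = 0 :=
    Pi2_comul_eq_zero h hcomul ha fun pq hpq => by simp [hpq]
  have hcg : Pi2 h (fun rs => (rs.1 + rs.2 = γ ∧ T rs) ∨ (¬(rs.1 + rs.2 = γ) ∧ T rs)) =
      Pi2 h T := Pi2_congr h fun pq => by tauto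
  have hh := LinearMap.congr_fun (hd.trans hcg) (Coalgebra.comul (R := k) a)
  simp only [LinearMap.add_apply] at hh
  rw [hz, add_zero] at hh
  exact hh

lemma map_Phi_id_comp_Pi2 (h : DirectSum.IsInternal 𝒜)
    (hcomul : ∀ (γ : Fin θ → ℤ), ∀ x ∈ 𝒜 γ,
      Coalgebra.comul (R := k) x ∈
        ⨆ (pq : (Fin θ → ℤ) × (Fin θ → ℤ)) (_ : pq.1 + pq.2 = γ), tpSub (𝒜 pq.1) (𝒜 pq.2))
    (ω : Fin θ → ℤ) (p q : Fin θ → ℤ) :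
    TensorProduct.map (Phi h ω) (LinearMap.id (R := k) (M := B)) ∘ₗ
      Pi2 h (fun s => s = (p, q)) =
    TensorProduct.map (Pi2 h (fun rs => rs.1 + rs.2 = p)) (piS h (fun s => s = q)) ∘ₗ
      TensorProduct.map (Phi h ω) LinearMap.id := by
  refine ext_homog2 h fun p' q' a ha b hb => ?_
  rw [LinearMap.comp_apply, LinearMap.comp_apply, Pi2_tmul h _ ha hb,
    TensorProduct.map_tmul, TensorProduct.map_tmul, LinearMap.id_apply,
    piS_apply_of_mem h _ hb]
  have hPhi_a : Pi2 h (fun rs => rs.1 + rs.2 = p) (Phi h ω a) =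
      Pi2 h (fun rs => (rs.1 + rs.2 = p) ∧ innerZ rs.1 ω < 0)
        (Coalgebra.comul (R := k) a) := by
    have : Phi h ω a = Pi2 h (fun pq => innerZ pq.1 ω < 0) (Coalgebra.comul (R := k) a) := rfl
    rw [this, ← LinearMap.comp_apply, Pi2_comp]
  by_cases hp : p' = p
  · subst hp
    by_cases hq : q' = q
    · subst hq
      rw [if_pos rfl, if_pos rfl, TensorProduct.map_tmul, hPhi_a,
        Pi2_restrict_comul h hcomul ha]
      rfl
    · rw [if_neg (by simp [hq]), if_neg hq, tmul_zero, map_zero]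
  · rw [if_neg (by simp [hp]), map_zero, hPhi_a,
      Pi2_comul_eq_zero h hcomul ha fun pq hpq => by simp [hpq, hp], zero_tmul]

lemma claim_i (h : DirectSum.IsInternal 𝒜)
    (hcomul : ∀ (γ : Fin θ → ℤ), ∀ x ∈ 𝒜 γ,
      Coalgebra.comul (R := k) x ∈
        ⨆ (pq : (Fin θ → ℤ) × (Fin θ → ℤ)) (_ : pq.1 + pq.2 = γ), tpSub (𝒜 pq.1) (𝒜 pq.2))
    (ω : Fin θ → ℤ) {x : B} (hx : Phi h ω x = 0) (p q : Fin θ → ℤ) :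
    TensorProduct.map (Phi h ω) (LinearMap.id (R := k) (M := B))
      (Pi2 h (fun s => s = (p, q)) (Coalgebra.comul (R := k) x)) = 0 := by
  rw [← LinearMap.comp_apply, map_Phi_id_comp_Pi2 h hcomul ω p q, LinearMap.comp_apply,
    map_Phi_id_comul h ω hx, map_zero]

lemma map_id_Phi_comp_Pi2 (h : DirectSum.IsInternal 𝒜)
    (hcomul : ∀ (γ : Fin θ → ℤ), ∀ x ∈ 𝒜 γ,
      Coalgebra.comul (R := k) x ∈
        ⨆ (pq : (Fin θ → ℤ) × (Fin θ → ℤ)) (_ : pq.1 + pq.2 = γ), tpSub (𝒜 pq.1) (𝒜 pq.2))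
    (ω : Fin θ → ℤ) (p q : Fin θ → ℤ) :
    TensorProduct.map (LinearMap.id (R := k) (M := B)) (Phi h ω) ∘ₗ
      Pi2 h (fun s => s = (p, q)) =
    TensorProduct.map (piS h (fun s => s = p)) (Pi2 h (fun rs => rs.1 + rs.2 = q)) ∘ₗ
      TensorProduct.map LinearMap.id (Phi h ω) := by
  refine ext_homog2 h fun p' q' a ha b hb => ?_
  rw [LinearMap.comp_apply, LinearMap.comp_apply, Pi2_tmul h _ ha hb,
    TensorProduct.map_tmul, TensorProduct.map_tmul, LinearMap.id_apply,
    piS_apply_of_mem h _ ha]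
  have hPhi_b : Pi2 h (fun rs => rs.1 + rs.2 = q) (Phi h ω b) =
      Pi2 h (fun rs => (rs.1 + rs.2 = q) ∧ innerZ rs.1 ω < 0)
        (Coalgebra.comul (R := k) b) := by
    have : Phi h ω b = Pi2 h (fun pq => innerZ pq.1 ω < 0) (Coalgebra.comul (R := k) b) := rfl
    rw [this, ← LinearMap.comp_apply, Pi2_comp]
  by_cases hq : q' = q
  · subst hq
    by_cases hp : p' = p
    · subst hp
      rw [if_pos rfl, if_pos rfl, TensorProduct.map_tmul, hPhi_b,
        Pi2_restrict_comul h hcomul hb]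
      rfl
    · rw [if_neg (by simp [hp]), if_neg hp, zero_tmul, map_zero]
  · rw [if_neg (by simp [hq]), map_zero, hPhi_b,
      Pi2_comul_eq_zero h hcomul hb fun pq hpq => by simp [hpq, hq], tmul_zero]

lemma ident (h : DirectSum.IsInternal 𝒜) (ω : Fin θ → ℤ) (p q : Fin θ → ℤ)
    (hp0 : innerZ p ω = 0) :
    TensorProduct.map (piS h (fun s => s = p))
        (Pi2 h (fun rs => rs.1 + rs.2 = q ∧ innerZ rs.1 ω < 0)) ∘ₗ
      (TensorProduct.assoc k B B B).toLinearMap =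
    (TensorProduct.map (piS h (fun s => s = p))
        (Pi2 h (fun rs => rs.1 + rs.2 = q ∧ innerZ rs.1 ω < 0)) ∘ₗ
      (TensorProduct.assoc k B B B).toLinearMap) ∘ₗ
      TensorProduct.map (Pi2 h (fun rs => innerZ (rs.1 + rs.2) ω < 0)) LinearMap.id := by
  refine ext_homog3 h fun p' r s a ha b hb c hc => ?_
  simp only [LinearMap.comp_apply, LinearEquiv.coe_coe, TensorProduct.map_tmul,
    TensorProduct.assoc_tmul, LinearMap.id_apply]
  rw [Pi2_tmul h _ ha hb]
  by_cases hM : innerZ (p' + r) ω < 0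
  · rw [if_pos hM, TensorProduct.assoc_tmul, TensorProduct.map_tmul]
  · rw [if_neg hM, zero_tmul, LinearEquiv.map_zero, map_zero]
    rw [piS_apply_of_mem h _ ha, Pi2_tmul h _ hb hc]
    by_cases hp : p' = p
    · subst hp
      by_cases hS : (r + s = q ∧ innerZ r ω < 0)
      · exfalso
        apply hM
        rw [innerZ_add, hp0, zero_add]
        exact hS.2
      · rw [if_pos rfl, if_neg hS, tmul_zero]
    · rw [if_neg hp, zero_tmul]

lemma claim_ii (h : DirectSum.IsInternal 𝒜)
    (hcomul : ∀ (γ : Fin θ → ℤ), ∀ x ∈ 𝒜 γ,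
      Coalgebra.comul (R := k) x ∈
        ⨆ (pq : (Fin θ → ℤ) × (Fin θ → ℤ)) (_ : pq.1 + pq.2 = γ), tpSub (𝒜 pq.1) (𝒜 pq.2))
    (ω : Fin θ → ℤ) {x : B} (hx : Phi h ω x = 0) {p : Fin θ → ℤ} (hp0 : innerZ p ω = 0)
    (q : Fin θ → ℤ) :
    TensorProduct.map (LinearMap.id (R := k) (M := B)) (Phi h ω)
      (Pi2 h (fun s => s = (p, q)) (Coalgebra.comul (R := k) x)) = 0 := by
  rw [← LinearMap.comp_apply, map_id_Phi_comp_Pi2 h hcomul ω p q, LinearMap.comp_apply]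
  -- rewrite the inner application
  have e1' : TensorProduct.map (LinearMap.id (R := k) (M := B)) (Phi h ω) =
      TensorProduct.map LinearMap.id (NN h ω) ∘ₗ
        TensorProduct.map LinearMap.id (Coalgebra.comul (R := k) (A := B)) := by
    rw [← TensorProduct.map_comp, LinearMap.id_comp]
    rfl
  rw [e1', LinearMap.comp_apply]
  -- fold outer ∘ inner-NN into a single map
  have e2 : TensorProduct.map (piS h (fun s => s = p))
      (Pi2 h (fun rs => rs.1 + rs.2 = q)) ∘ₗ
      TensorProduct.map (LinearMap.id (R := k) (M := B)) (NN h ω) =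
      TensorProduct.map (piS h (fun s => s = p))
        (Pi2 h (fun rs => rs.1 + rs.2 = q ∧ innerZ rs.1 ω < 0)) := by
    rw [← TensorProduct.map_comp, LinearMap.comp_id]
    have : (Pi2 h (fun rs => rs.1 + rs.2 = q)) ∘ₗ NN h ω =
        Pi2 h (fun rs => rs.1 + rs.2 = q ∧ innerZ rs.1 ω < 0) := by
      rw [NN, Pi2_comp]
    rw [this]
  rw [← LinearMap.comp_apply, e2]
  -- use coassociativity
  have e3 : TensorProduct.map (LinearMap.id (R := k) (M := B))
      (Coalgebra.comul (R := k) (A := B)) (Coalgebra.comul (R := k) x) =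
      (TensorProduct.assoc k B B B)
        ((Coalgebra.comul (R := k) (A := B)).rTensor B (Coalgebra.comul (R := k) x)) := by
    rw [Coalgebra.coassoc_apply]
    rfl
  rw [e3, ← LinearEquiv.coe_coe, ← LinearMap.comp_apply,
    ident h ω p q hp0]
  -- now kill with the M2 factor
  have hK : TensorProduct.map (Pi2 h (fun rs => innerZ (rs.1 + rs.2) ω < 0))
      (LinearMap.id (R := k) (M := B))
      ((Coalgebra.comul (R := k) (A := B)).rTensor B (Coalgebra.comul (R := k) x)) = 0 := by
    have c1 : TensorProduct.map (Pi2 h (fun rs => innerZ (rs.1 + rs.2) ω < 0))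
        (LinearMap.id (R := k) (M := B)) ∘ₗ
        (Coalgebra.comul (R := k) (A := B)).rTensor B =
        (Coalgebra.comul (R := k) (A := B)).rTensor B ∘ₗ
          TensorProduct.map (piS h (fun p' => innerZ p' ω < 0)) LinearMap.id := by
      rw [LinearMap.rTensor, ← TensorProduct.map_comp, ← TensorProduct.map_comp,
        M2_comul h hcomul ω]
    have c2 := LinearMap.congr_fun c1 (Coalgebra.comul (R := k) x)
    simp only [LinearMap.comp_apply] at c2
    rw [c2, ← NN_eq_map]
    have : NN h ω (Coalgebra.comul (R := k) x) = 0 := hx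
    rw [this, map_zero]
  rw [LinearMap.comp_apply, LinearMap.comp_apply, hK, map_zero, map_zero]

end S4

/-- `Δ(K_{≥0}) ⊆ K_{≥0} ⊗ K_{≥0} + K_{>0} ⊗ B`. -/
theorem statement4 (hθ : 0 < θ)
    (𝒜 : (Fin θ → ℤ) → Submodule k B)
    (hinternal : DirectSum.IsInternal 𝒜)
    (hone : (1 : B) ∈ 𝒜 0)
    (hmul : ∀ (α β : Fin θ → ℤ) (x y : B), x ∈ 𝒜 α → y ∈ 𝒜 β → x * y ∈ 𝒜 (α + β))
    (hcomul : ∀ (γ : Fin θ → ℤ), ∀ x ∈ 𝒜 γ,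
      Coalgebra.comul (R := k) x ∈
        ⨆ (pq : (Fin θ → ℤ) × (Fin θ → ℤ)) (_ : pq.1 + pq.2 = γ), tpSub (𝒜 pq.1) (𝒜 pq.2))
    (hcounit : ∀ (γ : Fin θ → ℤ), γ ≠ 0 → ∀ x ∈ 𝒜 γ, Coalgebra.counit (R := k) x = 0)
    (ω : Fin θ → ℤ) :
    ∀ x ∈ Kge 𝒜 ω, Coalgebra.comul (R := k) x ∈
      tpSub (Kge 𝒜 ω) (Kge 𝒜 ω) ⊔ tpSub (Kgt 𝒜 ω) ⊤ := by
  classical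
  intro x hx
  have hPhi : S4.Phi hinternal ω x = 0 := (S4.mem_Kge_iff hinternal ω x).mp hx
  obtain ⟨F, hF⟩ := S4.comp_decomp hinternal (Coalgebra.comul (R := k) x)
  rw [hF]
  refine Submodule.sum_mem _ fun pq _ => ?_
  obtain ⟨p, q⟩ := pq
  by_cases hneg : innerZ p ω < 0
  · have hzero : S4.Pi2 hinternal (fun s => s = (p, q)) (Coalgebra.comul (R := k) x) = 0 := by
      have e1 : S4.Pi2 hinternal (fun s : (Fin θ → ℤ) × (Fin θ → ℤ) => s = (p, q)) =
          S4.Pi2 hinternal (fun s : (Fin θ → ℤ) × (Fin θ → ℤ) =>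
            s = (p, q) ∧ innerZ s.1 ω < 0) :=
        S4.Pi2_congr hinternal fun s => by
          constructor
          · intro hs; exact ⟨hs, by rw [hs]; exact hneg⟩
          · exact fun hs => hs.1
      rw [e1, ← S4.Pi2_comp hinternal (fun s : (Fin θ → ℤ) × (Fin θ → ℤ) => s = (p, q))
        (fun s : (Fin θ → ℤ) × (Fin θ → ℤ) => innerZ s.1 ω < 0), LinearMap.comp_apply]
      have hbad : S4.Pi2 hinternal (fun s : (Fin θ → ℤ) × (Fin θ → ℤ) => innerZ s.1 ω < 0)
          (Coalgebra.comul (R := k) x) = 0 := hPhi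
      rw [hbad, map_zero]
    rw [hzero]
    exact zero_mem _
  · push_neg at hneg
    have hu1 : S4.Pi2 hinternal (fun s => s = (p, q)) (Coalgebra.comul (R := k) x) ∈
        tpSub (𝒜 p) (𝒜 q) := S4.Pi2_single_mem hinternal p q _
    have hz1 := S4.claim_i hinternal hcomul ω hPhi p q
    have hu2 := S4.left_exact_step (S4.Phi hinternal ω) hu1 hz1
    rcases hneg.lt_or_eq with hpos | hzero
    · refine Submodule.mem_sup_right (S4.tpSub_mono ?_ le_top hu2)
      intro y hy
      obtain ⟨hyA, hyK⟩ := Submodule.mem_inf.mp hy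
      refine Submodule.mem_inf.mpr
        ⟨(S4.mem_Kge_iff hinternal ω y).mpr (LinearMap.mem_ker.mp hyK), ?_⟩
      have hle : 𝒜 p ≤ Bgt 𝒜 ω := le_iSup_of_le p (le_iSup_of_le hpos le_rfl)
      exact hle hyA
    · have hz2 := S4.claim_ii hinternal hcomul ω hPhi hzero.symm q
      have hu3 := S4.right_exact_step (S4.Phi hinternal ω) hu2 hz2
      refine Submodule.mem_sup_left (S4.tpSub_mono ?_ ?_ hu3)
      · intro y hy
        exact (S4.mem_Kge_iff hinternal ω y).mpr
          (LinearMap.mem_ker.mp (Submodule.mem_inf.mp hy).2)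
      · intro y hy
        exact (S4.mem_Kge_iff hinternal ω y).mpr
          (LinearMap.mem_ker.mp (Submodule.mem_inf.mp hy).2)
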